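/- arXiv:1704.02232 — 10 statements merged into one kernel-verified Lean document; each statement's English description precedes it below -/
import Mathlib

section
/- For every real number x with 0 < x < 1, it holds that -((1-x)/x) * log(1-x) < sqrt(1-x). -/
lemma aux_key (s : ℝ) (h0 : 0 < s) (h1 : s < 1) :
    0 < 2 * Real.log s - s + 1/s := by
  have hanti : StrictAntiOn (fun y : ℝ => 2 * Real.log y - y + 1/y) (Set.Ioc 0 1) := by
    apply strictAntiOn_of_deriv_neg (convex_Ioc 0 1)
    · intro y hy
      have hy0 : y ≠ 0 := ne_of_gt hy.1
      exact (((continuousAt_const.mul (Real.continuousAt_log hy0)).sub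
        continuousAt_id).add (continuousAt_const.div continuousAt_id hy0)).continuousWithinAt
    · intro y hy
      rw [interior_Ioc] at hy
      have hy0 : y ≠ 0 := ne_of_gt hy.1
      have hd : HasDerivAt (fun y : ℝ => 2 * Real.log y - y + 1/y)
          (2 * (1/y) - 1 + (-(y^2)⁻¹)) y := by
        have h1' : HasDerivAt (fun y : ℝ => 2 * Real.log y) (2 * (1/y)) y := by
          simpa [one_div] using (Real.hasDerivAt_log hy0).const_mul 2
        have h2' : HasDerivAt (fun y : ℝ => y) 1 y := hasDerivAt_id y
        have h3' : HasDerivAt (fun y : ℝ => 1/y) (-(y^2)⁻¹) y := by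
          simpa [one_div] using hasDerivAt_inv hy0
        exact (h1'.sub h2').add h3'
      rw [hd.deriv]
      have ha : y⁻¹ ≠ 1 := by
        have : 1 < y⁻¹ := (one_lt_inv₀ hy.1).mpr hy.2
        linarith
      have hsq : 0 < (y⁻¹ - 1)^2 :=
        sq_pos_of_ne_zero (sub_ne_zero.mpr ha)
      have h2 : (y^2)⁻¹ = y⁻¹ * y⁻¹ := by
        rw [sq, mul_inv]
      rw [h2]
      simp only [one_div]
      nlinarith [hsq]
  have h01 : (1 : ℝ) ∈ Set.Ioc (0:ℝ) 1 := ⟨zero_lt_one, le_refl 1⟩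
  have hs : s ∈ Set.Ioc (0:ℝ) 1 := ⟨h0, le_of_lt h1⟩
  have := hanti hs h01 h1
  simp only [Real.log_one] at this
  linarith

theorem stmt0 (x : ℝ) (hx0 : 0 < x) (hx1 : x < 1) :
    -((1 - x) / x) * Real.log (1 - x) < Real.sqrt (1 - x) := by
  set s := Real.sqrt (1 - x) with hsdef
  have hx1' : 0 < 1 - x := by linarith
  have hs0 : 0 < s := Real.sqrt_pos.mpr hx1'
  have hs2 : s^2 = 1 - x := Real.sq_sqrt hx1'.le
  have hs1 : s < 1 := by
    nlinarith [hs2]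
  have hlog : Real.log (1 - x) = 2 * Real.log s := by
    rw [← hs2, Real.log_pow]
    push_cast
    ring
  have key := aux_key s hs0 hs1
  rw [hlog, ← hs2]
  rw [show -(s^2 / x) * (2 * Real.log s) = (-(s^2) * (2 * Real.log s)) / x by ring,
    div_lt_iff₀ hx0]
  have hx' : x = 1 - s^2 := by linarith
  have hkey2 : 0 < s * (2 * Real.log s - s + 1/s) := mul_pos hs0 key
  have hinv : s * (1/s) = 1 := by field_simp
  nlinarith [mul_pos hs0 hkey2, hkey2, hinv, hs0]
end

section
/- The function f(x) = (sqrt(1-x)/x) * log(1-x) is strictly increasing on the interval (0,1), and its limit as x tends to 0 from above equals -1. Consequently f(x) > -1 for all x in (0,1). -/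
open Real Filter Set

/-- Key inequality: `2x/(2-x) < -log(1-x)` on `(0,1)`. -/
lemma key_log_ineq (x : ℝ) (hx : x ∈ Set.Ioo (0:ℝ) 1) :
    2 * x / (2 - x) < -Real.log (1 - x) := by
  set g : ℝ → ℝ := fun y => -Real.log (1 - y) - 2 * y / (2 - y) with hg
  have hd : ∀ y ∈ Set.Ico (0:ℝ) 1,
      HasDerivAt g (y ^ 2 / ((1 - y) * (2 - y) ^ 2)) y := by
    intro y hy
    have h1y : (1:ℝ) - y ≠ 0 := by cases hy with | intro a b => intro h; nlinarith
    have h2y : (2:ℝ) - y ≠ 0 := by cases hy with | intro a b => intro h; nlinarith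
    have hlog : HasDerivAt (fun z : ℝ => Real.log (1 - z)) (-(1/(1-y))) y := by
      have := (Real.hasDerivAt_log h1y).comp y
        (((hasDerivAt_id y).const_sub 1))
      refine this.congr_deriv ?_
      field_simp
    have hfrac : HasDerivAt (fun z : ℝ => 2 * z / (2 - z))
        ((2 * (2 - y) - 2 * y * (-1)) / (2 - y) ^ 2) y := by
      have := ((hasDerivAt_id y).const_mul 2).div ((hasDerivAt_id y).const_sub 2) h2y
      refine this.congr_deriv ?_
      simp only [id]
      ring
    have := hlog.neg.sub hfrac
    refine this.congr_deriv ?_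
    field_simp
    ring
  have hm : StrictMonoOn g (Set.Ico (0:ℝ) 1) := by
    apply strictMonoOn_of_deriv_pos (convex_Ico 0 1)
      (fun y hy => (hd y hy).continuousAt.continuousWithinAt)
    intro y hy
    rw [interior_Ico] at hy
    rw [(hd y (Set.mem_Ico.mpr ⟨le_of_lt hy.1, hy.2⟩)).deriv]
    have h1 : (0:ℝ) < 1 - y := by linarith [hy.2]
    have h2 : (0:ℝ) < 2 - y := by linarith [hy.2]
    exact div_pos (pow_pos hy.1 2) (mul_pos h1 (pow_pos h2 2))
  have h0 : g 0 = 0 := by simp [hg]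
  have := hm (Set.mem_Ico.mpr ⟨le_refl 0, one_pos⟩)
    (Set.mem_Ico.mpr ⟨le_of_lt hx.1, hx.2⟩) hx.1
  rw [h0] at this
  simp only [hg] at this
  linarith

/-- Derivative of the main function on `(0,1)`. -/
lemma main_deriv (x : ℝ) (hx : x ∈ Set.Ioo (0:ℝ) 1) :
    HasDerivAt (fun y : ℝ => (Real.sqrt (1 - y) / y) * Real.log (1 - y))
      ((-((2 - x) * Real.log (1 - x)) - 2 * x) / (2 * Real.sqrt (1 - x) * x ^ 2)) x := by
  obtain ⟨hx0, hx1⟩ := hx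
  have h1x : (0:ℝ) < 1 - x := by linarith
  have hs : 0 < Real.sqrt (1 - x) := Real.sqrt_pos.mpr h1x
  have hs2 : Real.sqrt (1 - x) ^ 2 = 1 - x := Real.sq_sqrt h1x.le
  have h1 : HasDerivAt (fun y : ℝ => Real.sqrt (1 - y)) (-(1/(2 * Real.sqrt (1 - x)))) x := by
    have := (Real.hasDerivAt_sqrt h1x.ne').comp x ((hasDerivAt_id x).const_sub 1)
    refine this.congr_deriv ?_
    field_simp
  have h2 : HasDerivAt (fun y : ℝ => Real.log (1 - y)) (-(1/(1-x))) x := by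
    have := (Real.hasDerivAt_log h1x.ne').comp x ((hasDerivAt_id x).const_sub 1)
    refine this.congr_deriv ?_
    field_simp
  have h3 := (h1.mul h2).div (hasDerivAt_id x) hx0.ne'
  have hfun : (fun y : ℝ => (Real.sqrt (1 - y) / y) * Real.log (1 - y))
      = fun y : ℝ => Real.sqrt (1 - y) * Real.log (1 - y) / y := by
    funext y; ring
  rw [hfun]
  refine h3.congr_deriv ?_
  simp only [id, Pi.mul_apply]
  set L := Real.log (1 - x) with hL
  set s := Real.sqrt (1 - x) with hsdef
  rw [← hs2]
  have hsne : s ≠ 0 := hs.ne'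
  field_simp
  linear_combination (-2*L) * hs2

lemma main_limit :
    Filter.Tendsto (fun x : ℝ => (Real.sqrt (1 - x) / x) * Real.log (1 - x))
      (nhdsWithin 0 (Set.Ioi 0)) (nhds (-1)) := by
  have hlog : HasDerivAt (fun y : ℝ => Real.log (1 - y)) (-1) 0 := by
    have := (Real.hasDerivAt_log (by norm_num : (1:ℝ) - 0 ≠ 0)).comp 0
      ((hasDerivAt_id 0).const_sub 1)
    refine this.congr_deriv ?_
    norm_num
  have hslope := hasDerivAt_iff_tendsto_slope.mp hlog
  have hslope' : Filter.Tendsto (slope (fun y : ℝ => Real.log (1 - y)) 0)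
      (nhdsWithin 0 (Set.Ioi 0)) (nhds (-1)) :=
    hslope.mono_left (nhdsWithin_mono 0 (fun y hy => ne_of_gt hy))
  have hsqrt : Filter.Tendsto (fun y : ℝ => Real.sqrt (1 - y))
      (nhdsWithin 0 (Set.Ioi 0)) (nhds 1) := by
    have hc : ContinuousAt (fun y : ℝ => Real.sqrt (1 - y)) 0 := by
      exact (Real.continuous_sqrt.comp (continuous_const.sub continuous_id)).continuousAt
    have := hc.continuousWithinAt (s := Set.Ioi 0)
    simpa using this.tendsto
  have hmul := hsqrt.mul hslope'
  rw [one_mul] at hmul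
  apply hmul.congr
  intro y
  simp only [slope_def_field, sub_zero, Real.log_one]
  field_simp

theorem stmt1 :
    StrictMonoOn (fun x : ℝ => (Real.sqrt (1 - x) / x) * Real.log (1 - x)) (Set.Ioo 0 1) ∧
    Filter.Tendsto (fun x : ℝ => (Real.sqrt (1 - x) / x) * Real.log (1 - x))
      (nhdsWithin 0 (Set.Ioi 0)) (nhds (-1)) ∧
    ∀ x ∈ Set.Ioo (0 : ℝ) 1, (Real.sqrt (1 - x) / x) * Real.log (1 - x) > -1 := by
  have hmono : StrictMonoOn (fun x : ℝ => (Real.sqrt (1 - x) / x) * Real.log (1 - x))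
      (Set.Ioo 0 1) := by
    apply strictMonoOn_of_deriv_pos (convex_Ioo 0 1)
      (fun x hx => (main_deriv x hx).continuousAt.continuousWithinAt)
    intro x hx
    rw [interior_Ioo] at hx
    rw [(main_deriv x hx).deriv]
    obtain ⟨hx0, hx1⟩ := hx
    have h1x : (0:ℝ) < 1 - x := by linarith
    have hs : 0 < Real.sqrt (1 - x) := Real.sqrt_pos.mpr h1x
    have hkey := key_log_ineq x ⟨hx0, hx1⟩
    have h2x : (0:ℝ) < 2 - x := by linarith
    have hnum : 0 < -((2 - x) * Real.log (1 - x)) - 2 * x := by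
      have := (div_lt_iff₀ h2x).mp hkey
      nlinarith
    positivity
  refine ⟨hmono, main_limit, ?_⟩
  intro x hx
  obtain ⟨hx0, hx1⟩ := hx
  set m := x / 2 with hm
  have hm0 : 0 < m := by positivity
  have hmx : m < x := by simp [hm]; linarith
  have hmmem : m ∈ Set.Ioo (0:ℝ) 1 := ⟨hm0, by simp [hm]; linarith⟩
  have hlt : (Real.sqrt (1 - m) / m) * Real.log (1 - m)
      < (Real.sqrt (1 - x) / x) * Real.log (1 - x) :=
    hmono hmmem ⟨hx0, hx1⟩ hmx
  have hge : -1 ≤ (Real.sqrt (1 - m) / m) * Real.log (1 - m) := by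
    apply le_of_tendsto main_limit
    filter_upwards [Ioo_mem_nhdsGT_of_mem (Set.mem_Ico.mpr ⟨le_refl 0, hm0⟩)] with y hy
    exact le_of_lt (hmono ⟨hy.1, lt_trans hy.2 hmmem.2⟩ hmmem hy.2)
  linarith
end

section
/- For all real numbers θ_L, θ_R with 0 < θ_L < 1 and 0 < θ_R < 1, it holds that 2 - θ_L - θ_R - 2 * ((1-θ_L)(1-θ_R)/(θ_L θ_R)) * log(1-θ_L) * log(1-θ_R) > 0. -/
private lemma aux1 (s : ℝ) (hs0 : 0 < s) (hs1 : s < 1) :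
    s - 1/s - 2 * Real.log s < 0 := by
  set f : ℝ → ℝ := fun x => x - 1/x - 2 * Real.log x with hf
  have hmono : StrictMonoOn f (Set.Icc s 1) := by
    apply strictMonoOn_of_deriv_pos (convex_Icc s 1)
    · apply ContinuousOn.sub
      apply ContinuousOn.sub continuousOn_id
      · exact continuousOn_const.div continuousOn_id (fun x hx => by
          rcases hx with ⟨h1, h2⟩
          have : 0 < x := lt_of_lt_of_le hs0 h1
          exact ne_of_gt this)
      · exact continuousOn_const.mul (Real.continuousOn_log.mono (by
          intro x hx; rcases hx with ⟨h1, h2⟩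
          simp only [Set.mem_compl_iff, Set.mem_singleton_iff]
          have : 0 < x := lt_of_lt_of_le hs0 h1
          exact ne_of_gt this))
    · intro x hx
      rw [interior_Icc] at hx
      obtain ⟨hx1, hx2⟩ := hx
      have hx0 : 0 < x := lt_trans hs0 hx1
      have hd : HasDerivAt f (1 - (-(x^2)⁻¹) - 2 * x⁻¹) x := by
        have h1 : HasDerivAt (fun x : ℝ => x) 1 x := hasDerivAt_id x
        have h2 : HasDerivAt (fun x : ℝ => 1/x) (-(x^2)⁻¹) x := by
          simpa using hasDerivAt_inv (ne_of_gt hx0)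
        have h3 : HasDerivAt (fun x : ℝ => 2 * Real.log x) (2 * x⁻¹) x :=
          (Real.hasDerivAt_log (ne_of_gt hx0)).const_mul 2
        exact (h1.sub h2).sub h3
      rw [hd.deriv]
      have hxne : x ≠ 1 := ne_of_lt hx2
      have key : 1 + (x^2)⁻¹ - 2 * x⁻¹ = (1 - x⁻¹)^2 := by
        field_simp; ring
      have : (1:ℝ) - (-(x^2)⁻¹) - 2 * x⁻¹ = (1 - x⁻¹)^2 := by
        rw [← key]; ring
      rw [this]
      have h5 : x⁻¹ ≠ 1 := by
        intro h
        apply hxne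
        field_simp at h
        exact h.symm
      have h6 : 1 - x⁻¹ ≠ 0 := sub_ne_zero.mpr (Ne.symm h5)
      positivity
  have h1 : f s < f 1 := hmono ⟨le_refl s, le_of_lt hs1⟩ ⟨le_of_lt hs1, le_refl 1⟩ hs1
  have h2 : f 1 = 0 := by simp [hf]
  simp only [hf] at h1 h2
  linarith

private lemma aux2 (θ : ℝ) (h0 : 0 < θ) (h1 : θ < 1) :
    (1 - θ) * (Real.log (1 - θ))^2 < θ^2 := by
  set u := 1 - θ with hu
  have hu0 : 0 < u := by linarith
  have hu1 : u < 1 := by linarith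
  set s := Real.sqrt u with hs
  have hs0 : 0 < s := Real.sqrt_pos.mpr hu0
  have hs1 : s < 1 := by
    rw [hs, show (1:ℝ) = Real.sqrt 1 by simp]
    exact Real.sqrt_lt_sqrt (le_of_lt hu0) hu1
  have hsq : s^2 = u := Real.sq_sqrt (le_of_lt hu0)
  have hlog : Real.log u = 2 * Real.log s := by
    rw [hs, Real.log_sqrt (le_of_lt hu0)]; ring
  have key := aux1 s hs0 hs1
  set l := Real.log s with hl
  have hl0 : l < 0 := Real.log_neg hs0 hs1
  -- s - 1/s - 2l < 0, multiply by s > 0 : s² - 1 - 2sl < 0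
  have h2 : s^2 - 1 < 2 * s * l := by
    have := mul_lt_mul_of_pos_left key hs0
    have hne : s ≠ 0 := ne_of_gt hs0
    field_simp at this
    nlinarith [this]
  have h3 : 2 * s * l < 0 := by nlinarith
  -- both negative: square flips
  have h4 : (2 * s * l)^2 < (s^2 - 1)^2 := by nlinarith
  have hθ : θ = 1 - u := by rw [hu]; ring
  have : u * (Real.log u)^2 < (1 - u)^2 := by
    rw [hlog]
    nlinarith [h4, hsq]
  nlinarith [this]

theorem stmt2 (θL θR : ℝ) (hL0 : 0 < θL) (hL1 : θL < 1) (hR0 : 0 < θR) (hR1 : θR < 1) :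
    2 - θL - θR - 2 * ((1 - θL) * (1 - θR) / (θL * θR)) * Real.log (1 - θL) * Real.log (1 - θR)
      > 0 := by
  set x := 1 - θL with hx
  set y := 1 - θR with hy
  have hx0 : 0 < x := by linarith
  have hy0 : 0 < y := by linarith
  set lL := Real.log x with hlL
  set lR := Real.log y with hlR
  have hlL0 : lL < 0 := Real.log_neg hx0 (by linarith)
  have hlR0 : lR < 0 := Real.log_neg hy0 (by linarith)
  have kL : x * lL^2 < θL^2 := aux2 θL hL0 hL1
  have kR : y * lR^2 < θR^2 := aux2 θR hR0 hR1
  set A := x * y / (θL * θR) * lL * lR with hA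
  have hA0 : 0 < A := by
    have : 0 < lL * lR := mul_pos_of_neg_of_neg hlL0 hlR0
    have h1 : 0 < x * y / (θL * θR) := by positivity
    calc (0:ℝ) = x * y / (θL * θR) * 0 := by ring
    _ < x * y / (θL * θR) * (lL * lR) := by exact mul_lt_mul_of_pos_left this h1
    _ = A := by rw [hA]; ring
  have hA2 : A^2 < x * y := by
    have heq : A^2 = (x * lL^2) * (y * lR^2) * (x * y) / (θL^2 * θR^2) := by
      rw [hA]; field_simp
    rw [heq, div_lt_iff₀ (by positivity)]
    have hlLne : lL ≠ 0 := ne_of_lt hlL0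
    have hlRne : lR ≠ 0 := ne_of_lt hlR0
    have p1 : 0 < x * lL^2 := by positivity
    have p2 : 0 < y * lR^2 := by positivity
    nlinarith [mul_lt_mul'' kL kR (le_of_lt p1) (le_of_lt p2), mul_pos hx0 hy0]
  have hAsum : A < (x + y) / 2 := by
    apply lt_of_pow_lt_pow_left₀ 2 (by positivity)
    have h7 : x * y ≤ ((x + y) / 2)^2 := by nlinarith [sq_nonneg (x - y)]
    nlinarith [hA2, h7]
  have hgoal : 2 - θL - θR - 2 * (x * y / (θL * θR)) * lL * lR = x + y - 2 * A := by
    rw [hA]; ring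
  rw [hgoal]
  linarith
end

section
/- For all real numbers θ_L, θ_R with 0 < θ_L < 1 and 0 < θ_R < 1, it holds that ((1-θ_L)(1-θ_R)/(θ_L θ_R)) * log(1-θ_L) * log(1-θ_R) < sqrt((1-θ_L)(1-θ_R)), and hence this quantity is strictly less than 1. -/
lemma key_one_var (x : ℝ) (h0 : 0 < x) (h1 : x < 1) :
    (1 - x) / x * (-Real.log (1 - x)) < Real.sqrt (1 - x) := by
  have hu : (0:ℝ) < 1 - x := by linarith
  have hlogneg : Real.log (1 - x) < 0 := Real.log_neg hu (by linarith)
  set s : ℝ := -Real.log (1 - x) / 2 with hs_def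
  have hs0 : 0 < s := by rw [hs_def]; linarith
  have hsqrt_pos : 0 < Real.sqrt (1 - x) := Real.sqrt_pos.mpr hu
  have hsq : Real.sqrt (1 - x) ^ 2 = 1 - x := Real.sq_sqrt hu.le
  have hexp_neg : Real.exp (-s) = Real.sqrt (1 - x) := by
    rw [Real.sqrt_eq_rpow, Real.rpow_def_of_pos hu]
    ring_nf
    congr 1; rw [hs_def]; ring
  have hexp : Real.exp s = 1 / Real.sqrt (1 - x) := by
    rw [eq_div_iff hsqrt_pos.ne', ← hexp_neg, ← Real.exp_add]
    simp
  have hsinh : Real.sinh s = x / (2 * Real.sqrt (1 - x)) := by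
    rw [Real.sinh_eq, hexp, hexp_neg]
    rw [div_eq_div_iff (by norm_num) (by positivity)]
    have hone : (1 / Real.sqrt (1 - x)) * Real.sqrt (1 - x) = 1 := by field_simp
    nlinarith [hsq, hone]
  have hlt : s < x / (2 * Real.sqrt (1 - x)) := by
    rw [← hsinh]; exact Real.self_lt_sinh_iff.mpr hs0
  rw [hs_def, div_lt_div_iff₀ (by norm_num) (by positivity)] at hlt
  rw [div_mul_eq_mul_div, div_lt_iff₀ h0]
  nlinarith [hsq, hsqrt_pos, hlt]

theorem stmt3 (θL θR : ℝ) (hL0 : 0 < θL) (hL1 : θL < 1) (hR0 : 0 < θR) (hR1 : θR < 1) :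
    ((1 - θL) * (1 - θR) / (θL * θR)) * Real.log (1 - θL) * Real.log (1 - θR)
        < Real.sqrt ((1 - θL) * (1 - θR)) ∧
    ((1 - θL) * (1 - θR) / (θL * θR)) * Real.log (1 - θL) * Real.log (1 - θR) < 1 := by
  have hL : (1 - θL) / θL * (-Real.log (1 - θL)) < Real.sqrt (1 - θL) :=
    key_one_var θL hL0 hL1
  have hR : (1 - θR) / θR * (-Real.log (1 - θR)) < Real.sqrt (1 - θR) :=
    key_one_var θR hR0 hR1
  have hLpos : 0 < (1 - θL) / θL * (-Real.log (1 - θL)) := by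
    have h1 : Real.log (1 - θL) < 0 := Real.log_neg (by linarith) (by linarith)
    exact mul_pos (div_pos (by linarith) hL0) (by linarith)
  have hRpos : 0 < (1 - θR) / θR * (-Real.log (1 - θR)) := by
    have h1 : Real.log (1 - θR) < 0 := Real.log_neg (by linarith) (by linarith)
    exact mul_pos (div_pos (by linarith) hR0) (by linarith)
  have hmul : ((1 - θL) / θL * (-Real.log (1 - θL))) * ((1 - θR) / θR * (-Real.log (1 - θR)))
      < Real.sqrt (1 - θL) * Real.sqrt (1 - θR) :=
    mul_lt_mul'' hL hR hLpos.le hRpos.le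
  have heq : ((1 - θL) * (1 - θR) / (θL * θR)) * Real.log (1 - θL) * Real.log (1 - θR)
      = ((1 - θL) / θL * (-Real.log (1 - θL))) * ((1 - θR) / θR * (-Real.log (1 - θR))) := by
    field_simp
  have hsqrt_eq : Real.sqrt (1 - θL) * Real.sqrt (1 - θR)
      = Real.sqrt ((1 - θL) * (1 - θR)) := (Real.sqrt_mul (by linarith) _).symm
  have h1 : ((1 - θL) * (1 - θR) / (θL * θR)) * Real.log (1 - θL) * Real.log (1 - θR)
      < Real.sqrt ((1 - θL) * (1 - θR)) := by rw [heq, ← hsqrt_eq]; exact hmul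
  refine ⟨h1, h1.trans_le ?_⟩
  calc Real.sqrt ((1 - θL) * (1 - θR)) ≤ Real.sqrt 1 := by
        apply Real.sqrt_le_sqrt; nlinarith
    _ = 1 := Real.sqrt_one
end

section
/- Let B and k be positive real constants with B < 2. Then the only solution (z_L, z_R) in [0,1) × [0,1) of the system z_L = (sqrt(k)/B) * log((1+z_R)/(1-z_R)) and z_R = (1/(B sqrt(k))) * log((1+z_L)/(1-z_L)) is z_L = z_R = 0. -/
lemma key_ineq (z : ℝ) (h0 : 0 ≤ z) (h1 : z < 1) :
    2 * z ≤ Real.log ((1 + z) / (1 - z)) := by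
  have hden : 0 < 1 - z := by linarith
  have hnum : 0 < 1 + z := by linarith
  -- show (1 - z) * exp (2 z) ≤ 1 + z via monotonicity
  set f : ℝ → ℝ := fun x => (1 + x) - (1 - x) * Real.exp (2 * x) with hf
  have hderiv : ∀ x : ℝ, HasDerivAt f (1 - (1 - 2 * x) * Real.exp (2 * x)) x := by
    intro x
    have he : HasDerivAt (fun x : ℝ => Real.exp (2 * x)) (Real.exp (2 * x) * 2) x := by
      simpa using ((hasDerivAt_id x).const_mul 2).exp
    have hA : HasDerivAt (fun x : ℝ => 1 + x) 1 x := by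
      simpa using (hasDerivAt_id x).const_add 1
    have hB : HasDerivAt (fun x : ℝ => 1 - x) (-1) x := by
      simpa using (hasDerivAt_id x).const_sub (1:ℝ)
    have := hA.sub (hB.mul he)
    refine this.congr_deriv ?_
    ring
  have hmono : MonotoneOn f (Set.Icc 0 1) := by
    apply monotoneOn_of_deriv_nonneg (convex_Icc 0 1)
    · exact (Continuous.continuousOn (by continuity))
    · intro x hx
      exact (hderiv x).differentiableAt.differentiableWithinAt
    · intro x hx
      rw [(hderiv x).deriv]
      simp only [interior_Icc, Set.mem_Ioo] at hx
      have hle : (1 - 2 * x) * Real.exp (2 * x) ≤ 1 := by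
        have h := Real.add_one_le_exp (-(2 * x))
        have hp := Real.exp_pos (2 * x)
        have hmul : (-(2 * x) + 1) * Real.exp (2 * x) ≤ Real.exp (-(2 * x)) * Real.exp (2 * x) :=
          mul_le_mul_of_nonneg_right h (le_of_lt hp)
        rw [← Real.exp_add] at hmul
        simp at hmul
        nlinarith
      linarith
  have hf0 : f 0 = 0 := by simp [hf]
  have hfz : 0 ≤ f z := by
    have := hmono (Set.mem_Icc.2 ⟨le_refl 0, zero_le_one⟩)
      (Set.mem_Icc.2 ⟨h0, le_of_lt h1⟩) h0
    rwa [hf0] at this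
  have hexp : Real.exp (2 * z) ≤ (1 + z) / (1 - z) := by
    rw [le_div_iff₀ hden]
    simp only [hf] at hfz
    nlinarith [Real.exp_pos (2 * z)]
  have hpos : 0 < (1 + z) / (1 - z) := div_pos hnum hden
  exact (Real.le_log_iff_exp_le hpos).2 hexp

theorem stmt5 (B k zL zR : ℝ) (hB0 : 0 < B) (hB2 : B < 2) (hk : 0 < k)
    (hzL : zL ∈ Set.Ico (0 : ℝ) 1) (hzR : zR ∈ Set.Ico (0 : ℝ) 1)
    (h1 : zL = (Real.sqrt k / B) * Real.log ((1 + zR) / (1 - zR)))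
    (h2 : zR = (1 / (B * Real.sqrt k)) * Real.log ((1 + zL) / (1 - zL))) :
    zL = 0 ∧ zR = 0 := by
  obtain ⟨hzL0, hzL1⟩ := hzL
  obtain ⟨hzR0, hzR1⟩ := hzR
  have hs : 0 < Real.sqrt k := Real.sqrt_pos.2 hk
  set s := Real.sqrt k
  have kR := key_ineq zR hzR0 hzR1
  have kL := key_ineq zL hzL0 hzL1
  have hL : (s / B) * (2 * zR) ≤ zL := by
    rw [h1]
    exact mul_le_mul_of_nonneg_left kR (le_of_lt (div_pos hs hB0))
  have hR : (1 / (B * s)) * (2 * zL) ≤ zR := by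
    rw [h2]
    exact mul_le_mul_of_nonneg_left kL (le_of_lt (by positivity))
  have hL' : 2 * s * zR ≤ B * zL := by
    have := mul_le_mul_of_nonneg_left hL (le_of_lt hB0)
    rw [mul_comm] at this
    calc 2 * s * zR = (s / B) * (2 * zR) * B := by field_simp
      _ ≤ B * zL := this
  have hR' : 2 * zL ≤ B * s * zR := by
    have := mul_le_mul_of_nonneg_left hR (le_of_lt (mul_pos hB0 hs))
    calc 2 * zL = (B * s) * ((1 / (B * s)) * (2 * zL)) := by field_simp
      _ ≤ (B * s) * zR := this
      _ = B * s * zR := rfl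
  have hkey : (4 - B ^ 2) * zL ≤ 0 := by
    nlinarith [mul_le_mul_of_nonneg_left hL' hB0.le]
  have hB4 : 0 < 4 - B ^ 2 := by nlinarith
  have hle : zL ≤ 0 :=
    le_of_mul_le_mul_left (by linarith : (4 - B ^ 2) * zL ≤ (4 - B ^ 2) * 0) hB4
  have hzL_eq : zL = 0 := le_antisymm hle hzL0
  refine ⟨hzL_eq, ?_⟩
  rw [h2, hzL_eq]
  norm_num
end

section
/- Let B > 2 and k > 0 be real constants. Define y(x) = (1/(B sqrt(k))) * log((1+x)/(1-x)) and g(x) = (sqrt(k)/B) * log((1+y(x))/(1-y(x))) on the set of x in (0,1) where |y(x)| < 1. Then g has at most two fixed points in [0,1), one of which is x = 0; in particular, the system z_L = (sqrt(k)/B) log((1+z_R)/(1-z_R)), z_R = (1/(B sqrt(k))) log((1+z_L)/(1-z_L)) has at most one solution with z_L, z_R > 0. -/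
open Real Set

noncomputable def yAux (B k x : ℝ) : ℝ :=
  (1 / (B * Real.sqrt k)) * Real.log ((1 + x) / (1 - x))

noncomputable def gAux (B k x : ℝ) : ℝ :=
  (Real.sqrt k / B) * Real.log ((1 + yAux B k x) / (1 - yAux B k x))

noncomputable def Lf (x : ℝ) : ℝ := Real.log ((1 + x) / (1 - x))

lemma hasDerivAt_Lf {x : ℝ} (h1 : -1 < x) (h2 : x < 1) :
    HasDerivAt Lf (2 / (1 - x ^ 2)) x := by
  have hp : (0:ℝ) < 1 + x := by linarith
  have hm : (0:ℝ) < 1 - x := by linarith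
  have ha : HasDerivAt (fun t : ℝ => Real.log (1 + t)) (1 / (1 + x)) x := by
    have h0 : HasDerivAt (fun t : ℝ => 1 + t) 1 x := by
      simpa using (hasDerivAt_id x).const_add 1
    simpa [one_div, Function.comp_def] using (Real.hasDerivAt_log hp.ne').comp x h0
  have hb : HasDerivAt (fun t : ℝ => Real.log (1 - t)) (-(1 / (1 - x))) x := by
    have h0 : HasDerivAt (fun t : ℝ => 1 - t) (-1) x := by
      exact (hasDerivAt_id' x).const_sub 1
    simpa [one_div, Function.comp_def] using (Real.hasDerivAt_log hm.ne').comp x h0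
  have h : HasDerivAt (fun t : ℝ => Real.log (1 + t) - Real.log (1 - t))
      (2 / (1 - x ^ 2)) x := by
    have hx2 : (1:ℝ) - x ^ 2 ≠ 0 := by nlinarith
    have := ha.sub hb
    refine this.congr_deriv ?_
    field_simp
    ring
  refine h.congr_of_eventuallyEq ?_
  filter_upwards [Ioo_mem_nhds h1 h2] with t ht
  have hpt : (0:ℝ) < 1 + t := by linarith [ht.1]
  have hmt : (0:ℝ) < 1 - t := by linarith [ht.2]
  rw [Lf, Real.log_div hpt.ne' hmt.ne']

lemma Lf_lt_Lf {a b : ℝ} (ha : 0 ≤ a) (hab : a < b) (hb : b < 1) : Lf a < Lf b := by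
  have h1 : (0:ℝ) < 1 - b := by linarith
  have h2 : (0:ℝ) < 1 - a := by linarith
  apply Real.log_lt_log (by positivity)
  rw [div_lt_div_iff₀ h2 h1]
  nlinarith

lemma Lf_nonneg {a : ℝ} (ha : 0 ≤ a) (hb : a < 1) : 0 ≤ Lf a := by
  apply Real.log_nonneg
  rw [le_div_iff₀ (by linarith)]
  linarith

lemma gAux_zero (B k : ℝ) : gAux B k 0 = 0 := by
  have h : yAux B k 0 = 0 := by simp [yAux]
  simp [gAux, h]

set_option maxHeartbeats 1600000 in
lemma core {B k a b : ℝ} (hB : 2 < B) (hk : 0 < k) (ha : 0 < a) (hab : a < b)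
    (hb1 : b < 1) (hyb : yAux B k b < 1) (hfa : gAux B k a = a) (hfb : gAux B k b = b) :
    False := by
  have hsk0 : 0 < Real.sqrt k := Real.sqrt_pos.mpr hk
  have hsk2 : Real.sqrt k ^ 2 = k := Real.sq_sqrt hk.le
  set sk := Real.sqrt k with hsk
  have hB0 : 0 < B := by linarith
  have hyx : ∀ x : ℝ, yAux B k x = (1 / (B * sk)) * Lf x := fun x => rfl
  have hgx : ∀ x : ℝ, gAux B k x = (sk / B) * Lf (yAux B k x) := fun x => rfl
  have hymem : ∀ x ∈ Icc (0:ℝ) b, 0 ≤ yAux B k x ∧ yAux B k x < 1 := by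
    intro x hx
    have hx1 : x < 1 := lt_of_le_of_lt hx.2 hb1
    have hL0 : 0 ≤ Lf x := Lf_nonneg hx.1 hx1
    refine ⟨by rw [hyx]; positivity, ?_⟩
    rcases eq_or_lt_of_le hx.2 with h | h
    · rw [h]; exact hyb
    · have hL : Lf x < Lf b := Lf_lt_Lf hx.1 h hb1
      have : yAux B k x < yAux B k b := by
        rw [hyx, hyx]
        exact mul_lt_mul_of_pos_left hL (by positivity)
      linarith
  set D : ℝ → ℝ := fun x =>
    (sk / B) * (2 / (1 - (yAux B k x) ^ 2)) * ((1 / (B * sk)) * (2 / (1 - x ^ 2))) with hD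
  have hderiv : ∀ x ∈ Icc (0:ℝ) b, HasDerivAt (gAux B k) (D x) x := by
    intro x hx
    have hx1 : x < 1 := lt_of_le_of_lt hx.2 hb1
    obtain ⟨hy0, hy1⟩ := hymem x hx
    have hinner : HasDerivAt (yAux B k) ((1 / (B * sk)) * (2 / (1 - x ^ 2))) x := by
      have := (hasDerivAt_Lf (by linarith [hx.1]) hx1).const_mul (1 / (B * sk))
      exact this
    have houter := (hasDerivAt_Lf (by linarith : -1 < yAux B k x) hy1).comp x hinner
    have hfinal := houter.const_mul (sk / B)
    have : HasDerivAt (gAux B k)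
        ((sk / B) * ((2 / (1 - (yAux B k x) ^ 2)) * ((1 / (B * sk)) * (2 / (1 - x ^ 2))))) x :=
      hfinal
    convert this using 1
    simp [hD]; ring
  -- Rolle twice on h = g - id
  have hhder : ∀ x ∈ Icc (0:ℝ) b, HasDerivAt (fun x => gAux B k x - x) (D x - 1) x :=
    fun x hx => (hderiv x hx).sub (hasDerivAt_id x)
  have hcont : ContinuousOn (fun x => gAux B k x - x) (Icc (0:ℝ) b) :=
    fun x hx => ((hhder x hx).continuousAt).continuousWithinAt
  have hg0 : gAux B k 0 - 0 = gAux B k a - a := by rw [gAux_zero, hfa]; ring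
  have hgab : gAux B k a - a = gAux B k b - b := by rw [hfa, hfb]; ring
  obtain ⟨c₁, hc₁, hDc₁⟩ := exists_hasDerivAt_eq_zero ha
    (hcont.mono (Icc_subset_Icc le_rfl hab.le)) hg0
    (fun x hx => hhder x ⟨hx.1.le, hx.2.le.trans hab.le⟩)
  obtain ⟨c₂, hc₂, hDc₂⟩ := exists_hasDerivAt_eq_zero hab
    (hcont.mono (Icc_subset_Icc ha.le le_rfl)) hgab
    (fun x hx => hhder x ⟨ha.le.trans hx.1.le, hx.2.le⟩)
  -- translate D c = 1 into the algebraic equation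
  have key : ∀ c, 0 < c → c < b → D c - 1 = 0 →
      (B ^ 2 * k - (Lf c) ^ 2) * (1 - c ^ 2) = 4 * k := by
    intro c hc0 hcb hDc
    obtain ⟨hy0, hy1⟩ := hymem c ⟨hc0.le, hcb.le⟩
    have hc1 : c < 1 := lt_trans hcb hb1
    set y := yAux B k c with hy
    have h1 : (0:ℝ) < 1 - y ^ 2 := by nlinarith
    have h2 : (0:ℝ) < 1 - c ^ 2 := by nlinarith
    have hDc' : (sk / B) * (2 / (1 - y ^ 2)) * ((1 / (B * sk)) * (2 / (1 - c ^ 2))) = 1 := by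
      have hD1 : D c = 1 := by linarith
      simpa [hD] using hD1
    have h4 : (1 - y ^ 2) * (1 - c ^ 2) * B ^ 2 = 4 := by
      field_simp at hDc'
      nlinarith [hDc', hsk0, sq_nonneg sk]
    have h5 : Lf c = y * (B * sk) := by
      rw [hy, hyx]; field_simp
    rw [h5]
    linear_combination k * h4 - y ^ 2 * B ^ 2 * (1 - c ^ 2) * hsk2
  have e₁ := key c₁ hc₁.1 (hc₁.2.trans hab) hDc₁
  have e₂ := key c₂ (ha.trans hc₂.1) hc₂.2 hDc₂
  clear key hD hderiv hhder hcont hymem hyx hgx hDc₁ hDc₂ hg0 hgab hfa hfb hyb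
  clear_value D sk
  clear D hsk
  have hc12 : c₁ < c₂ := hc₁.2.trans hc₂.1
  have hc21 : c₂ < 1 := hc₂.2.trans hb1
  have hu : Lf c₁ < Lf c₂ := Lf_lt_Lf hc₁.1.le hc12 hc21
  have hu0 : 0 ≤ Lf c₁ := Lf_nonneg hc₁.1.le (hc12.trans hc21)
  have hp2 : (0:ℝ) < 1 - c₂ ^ 2 := by nlinarith [hc₂.1, ha]
  have hpos : 0 < B ^ 2 * k - (Lf c₂) ^ 2 := by nlinarith [e₂, hp2, hk]
  have hq : 1 - c₂ ^ 2 < 1 - c₁ ^ 2 := by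
    have h := mul_self_lt_mul_self hc₁.1.le hc12
    rw [← sq, ← sq] at h
    linarith
  have hq1 : (0:ℝ) < 1 - c₁ ^ 2 := lt_trans hp2 hq
  have hA : B ^ 2 * k - Lf c₂ ^ 2 < B ^ 2 * k - Lf c₁ ^ 2 := by
    have h := mul_self_lt_mul_self hu0 hu
    rw [← sq, ← sq] at h
    linarith
  have h1 := mul_lt_mul_of_pos_left hq hpos
  have h2 := mul_lt_mul_of_pos_right hA hq1
  linarith [e₁, e₂, h1, h2]

theorem stmt6 (B k : ℝ) (hB : 2 < B) (hk : 0 < k) :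
    ({x ∈ Set.Ico (0 : ℝ) 1 | |yAux B k x| < 1 ∧ gAux B k x = x}.encard ≤ 2 ∧
      gAux B k 0 = 0) ∧
    {q : ℝ × ℝ | 0 < q.1 ∧ q.1 < 1 ∧ 0 < q.2 ∧ q.2 < 1 ∧
      q.1 = (Real.sqrt k / B) * Real.log ((1 + q.2) / (1 - q.2)) ∧
      q.2 = (1 / (B * Real.sqrt k)) * Real.log ((1 + q.1) / (1 - q.1))}.Subsingleton := by
  constructor
  · refine ⟨?_, gAux_zero B k⟩
    set S := {x ∈ Set.Ico (0 : ℝ) 1 | |yAux B k x| < 1 ∧ gAux B k x = x} with hS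
    have hsub : S ⊆ insert 0 {x | x ∈ S ∧ 0 < x} := by
      intro x hx
      rcases eq_or_lt_of_le hx.1.1 with h | h
      · exact Or.inl h.symm
      · exact Or.inr ⟨hx, h⟩
    have hsubs : {x | x ∈ S ∧ 0 < x}.Subsingleton := by
      intro x hx y hy
      by_contra hne
      rcases lt_or_gt_of_ne hne with h | h
      · exact core hB hk hx.2 h hy.1.1.2 ((abs_lt.mp hy.1.2.1).2) hx.1.2.2 hy.1.2.2
      · exact core hB hk hy.2 h hx.1.1.2 ((abs_lt.mp hx.1.2.1).2) hy.1.2.2 hx.1.2.2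
    calc S.encard ≤ (insert 0 {x | x ∈ S ∧ 0 < x}).encard := Set.encard_mono hsub
      _ ≤ {x | x ∈ S ∧ 0 < x}.encard + 1 := Set.encard_insert_le _ _
      _ ≤ 1 + 1 := by
          gcongr
          exact Set.encard_le_one_iff.mpr (fun a b h1 h2 => hsubs h1 h2)
      _ = 2 := by norm_num
  · intro q hq r hr
    simp only [Set.mem_setOf_eq] at hq hr
    obtain ⟨hq1, hq2, hq3, hq4, hq5, hq6⟩ := hq
    obtain ⟨hr1, hr2, hr3, hr4, hr5, hr6⟩ := hr
    have hyq : yAux B k q.1 = q.2 := hq6.symm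
    have hyr : yAux B k r.1 = r.2 := hr6.symm
    have hgq : gAux B k q.1 = q.1 := by rw [gAux, hyq]; exact hq5.symm
    have hgr : gAux B k r.1 = r.1 := by rw [gAux, hyr]; exact hr5.symm
    have h1 : q.1 = r.1 := by
      by_contra hne
      rcases lt_or_gt_of_ne hne with h | h
      · exact core hB hk hq1 h hr2 (by rw [hyr]; exact hr4) hgq hgr
      · exact core hB hk hr1 h hq2 (by rw [hyq]; exact hq4) hgr hgq
    have h2 : q.2 = r.2 := by rw [← hyq, ← hyr, h1]
    exact Prod.ext h1 h2
end

section
/- Define h(x) = ((1-x^2)/x) * log((1+x)/(1-x)) for x in (0,1). Then h'(x) < -2x < 0 for all x in (0,1), and the limit of h(x) as x tends to 0 from above equals 2; consequently h(x) < 2 for all x in (0,1). -/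
open Real Set Filter

noncomputable def hAux (x : ℝ) : ℝ := ((1 - x ^ 2) / x) * Real.log ((1 + x) / (1 - x))

/-- derivative of L(x) = log(1+x) - log(1-x) on (-1,1) -/
lemma hd_L {x : ℝ} (hx : x ∈ Set.Ioo (-1 : ℝ) 1) :
    HasDerivAt (fun y => Real.log (1 + y) - Real.log (1 - y)) (1 / (1 + x) + 1 / (1 - x)) x := by
  obtain ⟨h1, h2⟩ := hx
  have p1 : (0:ℝ) < 1 + x := by linarith
  have p2 : (0:ℝ) < 1 - x := by linarith
  have d1 : HasDerivAt (fun y : ℝ => Real.log (1 + y)) (1 / (1 + x)) x := by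
    have := ((hasDerivAt_id x).const_add 1).log (by positivity)
    simpa using this
  have d2 : HasDerivAt (fun y : ℝ => Real.log (1 - y)) ((-1) / (1 - x)) x := by
    have := ((hasDerivAt_id x).const_sub 1).log (by positivity)
    simpa using this
  have : HasDerivAt (fun y => Real.log (1 + y) - Real.log (1 - y)) (1 / (1 + x) - -1 / (1 - x)) x := d1.sub d2
  convert this using 1
  field_simp
  ring

/-- L > 2x on (0,1) -/
lemma L_gt {x : ℝ} (hx : x ∈ Set.Ioo (0 : ℝ) 1) :
    2 * x < Real.log (1 + x) - Real.log (1 - x) := by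
  obtain ⟨hx0, hx1⟩ := hx
  set G : ℝ → ℝ := fun y => Real.log (1 + y) - Real.log (1 - y) - 2 * y with hG
  have hmono : StrictMonoOn G (Set.Ico 0 1) := by
    apply strictMonoOn_of_deriv_pos (convex_Ico 0 1)
    · apply ContinuousOn.sub
      apply ContinuousOn.sub
      · exact (continuousOn_const.add continuousOn_id).log (fun y hy => by
          simp only [Set.mem_Ico] at hy; intro h; simp only [Pi.add_apply, id_eq] at h; nlinarith [hy.1])
      · exact (continuousOn_const.sub continuousOn_id).log (fun y hy => by
          simp only [Set.mem_Ico] at hy; intro h; simp only [Pi.sub_apply, id_eq] at h; nlinarith [hy.2])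
      · exact continuousOn_const.mul continuousOn_id
    · intro y hy
      rw [interior_Ico] at hy
      obtain ⟨hy0, hy1⟩ := hy
      have d2y : HasDerivAt (fun z : ℝ => 2 * z) 2 y := by
        simpa using (hasDerivAt_id y).const_mul 2
      have hd : HasDerivAt G (1 / (1 + y) + 1 / (1 - y) - 2) y :=
        (hd_L ⟨by linarith, hy1⟩).sub d2y
      rw [hd.deriv]
      have p1 : (0:ℝ) < 1 + y := by linarith
      have p2 : (0:ℝ) < 1 - y := by linarith
      rw [div_add_div _ _ (ne_of_gt p1) (ne_of_gt p2)]
      rw [sub_pos, lt_div_iff₀ (by positivity)]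
      nlinarith
  have h0 : G 0 = 0 := by simp [hG]
  have := hmono (Set.left_mem_Ico.mpr one_pos) ⟨le_of_lt hx0, hx1⟩ hx0
  rw [h0] at this
  simp only [hG] at this
  linarith

/-- (1-x²)·L < 2x on (0,1) -/
lemma F_gt {x : ℝ} (hx : x ∈ Set.Ioo (0 : ℝ) 1) :
    (1 - x ^ 2) * (Real.log (1 + x) - Real.log (1 - x)) < 2 * x := by
  obtain ⟨hx0, hx1⟩ := hx
  set F : ℝ → ℝ := fun y => 2 * y - (1 - y ^ 2) * (Real.log (1 + y) - Real.log (1 - y)) with hF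
  have hmono : StrictMonoOn F (Set.Ico 0 1) := by
    apply strictMonoOn_of_deriv_pos (convex_Ico 0 1)
    · apply ContinuousOn.sub
      · exact continuousOn_const.mul continuousOn_id
      · apply ContinuousOn.mul
        · fun_prop
        · apply ContinuousOn.sub
          · exact (continuousOn_const.add continuousOn_id).log (fun y hy => by
              simp only [Set.mem_Ico] at hy; intro h; simp only [Pi.add_apply, id_eq] at h; nlinarith [hy.1])
          · exact (continuousOn_const.sub continuousOn_id).log (fun y hy => by
              simp only [Set.mem_Ico] at hy; intro h; simp only [Pi.sub_apply, id_eq] at h; nlinarith [hy.2])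
    · intro y hy
      rw [interior_Ico] at hy
      obtain ⟨hy0, hy1⟩ := hy
      have p1 : (0:ℝ) < 1 + y := by linarith
      have p2 : (0:ℝ) < 1 - y := by linarith
      have dq : HasDerivAt (fun z : ℝ => 1 - z ^ 2) (-(2 * y)) y := by
        simpa using ((hasDerivAt_pow 2 y).const_sub 1)
      have hd : HasDerivAt F
          (2 - ((-(2 * y)) * (Real.log (1 + y) - Real.log (1 - y)) +
            (1 - y ^ 2) * (1 / (1 + y) + 1 / (1 - y)))) y := by
        have d2y : HasDerivAt (fun z : ℝ => 2 * z) 2 y := by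
          simpa using (hasDerivAt_id y).const_mul 2
        exact d2y.sub (dq.mul (hd_L ⟨by linarith, hy1⟩))
      rw [hd.deriv]
      have hsimp : (1 - y ^ 2) * (1 / (1 + y) + 1 / (1 - y)) = 2 := by
        field_simp
        ring
      rw [hsimp]
      have hLpos : 0 < Real.log (1 + y) - Real.log (1 - y) := by
        have := L_gt ⟨hy0, hy1⟩
        linarith
      nlinarith
  have h0 : F 0 = 0 := by simp [hF]
  have := hmono (Set.left_mem_Ico.mpr one_pos) ⟨le_of_lt hx0, hx1⟩ hx0
  rw [h0] at this
  simp only [hF] at this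
  linarith

theorem stmt8 :
    (∀ x ∈ Set.Ioo (0 : ℝ) 1, deriv hAux x < -2 * x ∧ -2 * x < 0) ∧
    Filter.Tendsto hAux (nhdsWithin 0 (Set.Ioi 0)) (nhds 2) ∧
    ∀ x ∈ Set.Ioo (0 : ℝ) 1, hAux x < 2 := by
  have hEq : ∀ x ∈ Set.Ioo (-1:ℝ) 1, hAux x = ((1 - x ^ 2) / x) * (Real.log (1 + x) - Real.log (1 - x)) := by
    intro x hx
    obtain ⟨h1, h2⟩ := hx
    unfold hAux
    rw [Real.log_div (by linarith) (by linarith)]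
  refine ⟨?_, ?_, ?_⟩
  · intro x hx
    obtain ⟨hx0, hx1⟩ := hx
    have p1 : (0:ℝ) < 1 + x := by linarith
    have p2 : (0:ℝ) < 1 - x := by linarith
    refine ⟨?_, by nlinarith⟩
    -- deriv computation
    have dq : HasDerivAt (fun z : ℝ => (1 - z ^ 2) / z) (-((1 + x ^ 2) / x ^ 2)) x := by
      have dn : HasDerivAt (fun z : ℝ => 1 - z ^ 2) (-(2 * x)) x := by
        simpa using ((hasDerivAt_pow 2 x).const_sub 1)
      have : HasDerivAt (fun z : ℝ => (1 - z ^ 2) / z) ((-(2 * x) * x - (1 - x ^ 2) * 1) / x ^ 2) x := dn.div (hasDerivAt_id x) (ne_of_gt hx0)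
      convert this using 1
      field_simp
      ring
    have hd : HasDerivAt (fun z => ((1 - z ^ 2) / z) * (Real.log (1 + z) - Real.log (1 - z)))
        ((-((1 + x ^ 2) / x ^ 2)) * (Real.log (1 + x) - Real.log (1 - x)) +
          ((1 - x ^ 2) / x) * (1 / (1 + x) + 1 / (1 - x))) x :=
      dq.mul (hd_L ⟨by linarith, hx1⟩)
    have heq' : hAux =ᶠ[nhds x] fun z => ((1 - z ^ 2) / z) * (Real.log (1 + z) - Real.log (1 - z)) := by
      filter_upwards [isOpen_Ioo.mem_nhds (show x ∈ Set.Ioo (-1:ℝ) 1 from ⟨by linarith, hx1⟩)] with z hz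
      exact hEq z hz
    rw [heq'.deriv_eq, hd.deriv]
    have hsimp : ((1 - x ^ 2) / x) * (1 / (1 + x) + 1 / (1 - x)) = 2 / x := by
      field_simp
      ring
    rw [hsimp]
    have hL := L_gt ⟨hx0, hx1⟩
    have hc : 0 < (1 + x ^ 2) / x ^ 2 := by positivity
    have key : (-((1 + x ^ 2) / x ^ 2)) * (Real.log (1 + x) - Real.log (1 - x)) <
        (-((1 + x ^ 2) / x ^ 2)) * (2 * x) := by
      have := mul_lt_mul_of_pos_left hL hc
      linarith
    have hval : (-((1 + x ^ 2) / x ^ 2)) * (2 * x) + 2 / x = -2 * x := by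
      field_simp
      ring
    linarith
  · -- limit
    set g : ℝ → ℝ := fun x => Real.log ((1 + x) / (1 - x)) with hg
    have hdg : HasDerivAt g 2 0 := by
      have hE : g =ᶠ[nhds 0] fun z => Real.log (1 + z) - Real.log (1 - z) := by
        filter_upwards [isOpen_Ioo.mem_nhds (show (0:ℝ) ∈ Set.Ioo (-1:ℝ) 1 by norm_num)] with z hz
        obtain ⟨h1, h2⟩ := hz
        simp only [hg]
        rw [Real.log_div (by linarith) (by linarith)]
      have := hd_L (show (0:ℝ) ∈ Set.Ioo (-1:ℝ) 1 by norm_num)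
      have h2 : HasDerivAt g (1 / (1 + 0) + 1 / (1 - 0)) 0 := this.congr_of_eventuallyEq hE
      norm_num at h2
      exact h2
    have hslope : Tendsto (slope g 0) (nhdsWithin 0 {(0:ℝ)}ᶜ) (nhds 2) :=
      hasDerivAt_iff_tendsto_slope.mp hdg
    have hslope' : Tendsto (slope g 0) (nhdsWithin 0 (Set.Ioi 0)) (nhds 2) :=
      hslope.mono_left (nhdsWithin_mono 0 (fun z hz => ne_of_gt hz))
    have hcont : Tendsto (fun x : ℝ => 1 - x ^ 2) (nhdsWithin 0 (Set.Ioi 0)) (nhds 1) := by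
      have : Tendsto (fun x : ℝ => 1 - x ^ 2) (nhds 0) (nhds (1 - 0 ^ 2)) := by
        exact (continuous_const.sub (continuous_pow 2)).tendsto 0
      simpa using this.mono_left nhdsWithin_le_nhds
    have hmul := hcont.mul hslope'
    rw [one_mul] at hmul
    apply hmul.congr'
    filter_upwards [self_mem_nhdsWithin] with x hx
    have hx0 : (0:ℝ) < x := hx
    have hg0 : g 0 = 0 := by simp [hg]
    rw [slope_def_field, hg0, sub_zero, sub_zero]
    unfold hAux
    simp only [hg]
    ring
  · intro x hx
    obtain ⟨hx0, hx1⟩ := hx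
    rw [hEq x ⟨by linarith, hx1⟩]
    rw [div_mul_eq_mul_div, div_lt_iff₀ hx0]
    have := F_gt ⟨hx0, hx1⟩
    linarith
end

section
/- Let B, k > 0 and suppose θ_L, θ_R ∈ (0,1) satisfy exp(-B sqrt(k) θ_R) = 1 - θ_L and exp(-(B/sqrt(k)) θ_L) = 1 - θ_R. Then (1 - θ_L)(1 - θ_R) B^2 < 1. -/
theorem stmt9 (B k θL θR : ℝ) (hB : 0 < B) (hk : 0 < k)
    (hθL : θL ∈ Set.Ioo (0 : ℝ) 1) (hθR : θR ∈ Set.Ioo (0 : ℝ) 1)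
    (h1 : Real.exp (-(B * Real.sqrt k * θR)) = 1 - θL)
    (h2 : Real.exp (-((B / Real.sqrt k) * θL)) = 1 - θR) :
    (1 - θL) * (1 - θR) * B ^ 2 < 1 := by
  obtain ⟨hL0, hL1⟩ := hθL
  obtain ⟨hR0, hR1⟩ := hθR
  have hsk : 0 < Real.sqrt k := Real.sqrt_pos.2 hk
  set a := B * Real.sqrt k * θR with ha
  set b := B / Real.sqrt k * θL with hb
  have hapos : 0 < a := by positivity
  have hbpos : 0 < b := by positivity
  have hea : Real.exp (-a) * Real.exp a = 1 := by
    rw [← Real.exp_add]; simp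
  have heb : Real.exp (-b) * Real.exp b = 1 := by
    rw [← Real.exp_add]; simp
  have hA : a * Real.exp (-a) < θL := by
    have h := Real.add_one_lt_exp (ne_of_gt hapos)
    nlinarith [Real.exp_pos (-a), h1]
  have hB' : b * Real.exp (-b) < θR := by
    have h := Real.add_one_lt_exp (ne_of_gt hbpos)
    nlinarith [Real.exp_pos (-b), h2]
  have hab : a * b = B ^ 2 * θL * θR := by
    rw [ha, hb]; field_simp
  have hprod : (a * Real.exp (-a)) * (b * Real.exp (-b)) < θL * θR := by
    have h1' : 0 < a * Real.exp (-a) := by positivity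
    exact mul_lt_mul'' hA hB' (le_of_lt h1') (by positivity)
  have key : a * b * (Real.exp (-a) * Real.exp (-b)) < θL * θR := by
    linear_combination hprod
  rw [hab] at key
  rw [← h1, ← h2, ← mul_lt_mul_iff_left₀ (mul_pos hL0 hR0)]
  linear_combination key
end

section
/- Let B, k, α_L, α_R > 0 and suppose θ_L, θ_R ∈ (0,1) satisfy exp(-B sqrt(k) α_R θ_R) = 1 - θ_L and exp(-(B/sqrt(k)) α_L θ_L) = 1 - θ_R. Then 1 - (1 - θ_L)(1 - θ_R) B^2 α_L α_R > 0; in particular, 1 - ((1-θ_L)(1-θ_R)/(θ_L θ_R)) * log(1-θ_L) * log(1-θ_R) > 1 - sqrt((1-θ_L)(1-θ_R)) > 0. -/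
lemma aux_sqrt_lt_one {x : ℝ} (hx : 0 ≤ x) (hx1 : x < 1) : Real.sqrt x < 1 := by
  have := Real.sqrt_lt_sqrt hx hx1
  simpa using this

lemma aux_sub_lt_log (s : ℝ) (hs0 : 0 < s) (hs1 : s < 1) :
    s - 1/s < 2 * Real.log s := by
  have hmono : StrictMonoOn (fun x : ℝ => x - x⁻¹ - 2 * Real.log x) (Set.Ioc 0 1) := by
    apply strictMonoOn_of_deriv_pos (convex_Ioc 0 1)
    · apply ContinuousOn.sub
      · exact continuousOn_id.sub (continuousOn_inv₀.mono (fun x hx => ne_of_gt hx.1))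
      · exact continuousOn_const.mul (Real.continuousOn_log.mono
          (fun x hx => ne_of_gt hx.1))
    · intro x hx
      rw [interior_Ioc] at hx
      have hx0 : (0:ℝ) < x := hx.1
      have hx0' : x ≠ 0 := ne_of_gt hx0
      have hd : HasDerivAt (fun y : ℝ => y - y⁻¹ - 2 * Real.log y)
          (1 - (-(x^2)⁻¹) - 2 * x⁻¹) x :=
        ((hasDerivAt_id x).sub (hasDerivAt_inv hx0')).sub
          ((Real.hasDerivAt_log hx0').const_mul 2)
      rw [hd.deriv]
      have e : 1 - (-(x^2)⁻¹) - 2 * x⁻¹ = (x - 1)^2 / x^2 := by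
        field_simp; ring
      rw [e]
      have hne : x - 1 ≠ 0 := sub_ne_zero.mpr (ne_of_lt hx.2)
      have h1' : (0:ℝ) < (x - 1)^2 := by
        have := sq_abs (x - 1)
        have habs : 0 < |x - 1| := abs_pos.mpr hne
        nlinarith
      exact div_pos h1' (by positivity)
  have h := hmono (Set.mem_Ioc.mpr ⟨hs0, le_of_lt hs1⟩)
      (Set.mem_Ioc.mpr ⟨one_pos, le_refl 1⟩) hs1
  simp only [Real.log_one] at h
  have hse : s⁻¹ = 1/s := inv_eq_one_div s
  rw [hse] at h
  norm_num at h
  linarith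

lemma aux_factor_lt (θ : ℝ) (h0 : 0 < θ) (h1 : θ < 1) :
    (1 - θ) * (-Real.log (1 - θ)) / θ < Real.sqrt (1 - θ) := by
  set s := Real.sqrt (1 - θ) with hs
  have ht0 : (0:ℝ) < 1 - θ := by linarith
  have hs0 : 0 < s := Real.sqrt_pos.mpr ht0
  have hs2 : s^2 = 1 - θ := Real.sq_sqrt (le_of_lt ht0)
  have hs1 : s < 1 := aux_sqrt_lt_one (le_of_lt ht0) (by linarith)
  have hlog : Real.log (1 - θ) = 2 * Real.log s := by
    rw [← hs2, sq, Real.log_mul (ne_of_gt hs0) (ne_of_gt hs0)]; ring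
  have hkey := aux_sub_lt_log s hs0 hs1
  rw [← hlog] at hkey
  rw [div_lt_iff₀ h0]
  have h' : -Real.log (1 - θ) < 1/s - s := by linarith
  have h2 : (1 - θ) * (-Real.log (1 - θ)) < (1 - θ) * (1/s - s) :=
    mul_lt_mul_of_pos_left h' ht0
  have h3 : (1 - θ) * (1/s - s) = s * θ := by
    field_simp
    nlinarith [hs2]
  linarith

theorem stmt10 (B k αL αR θL θR : ℝ) (hB : 0 < B) (hk : 0 < k)
    (hαL : 0 < αL) (hαR : 0 < αR)
    (hθL : θL ∈ Set.Ioo (0 : ℝ) 1) (hθR : θR ∈ Set.Ioo (0 : ℝ) 1)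
    (h1 : Real.exp (-(B * Real.sqrt k * αR * θR)) = 1 - θL)
    (h2 : Real.exp (-((B / Real.sqrt k) * αL * θL)) = 1 - θR) :
    0 < 1 - (1 - θL) * (1 - θR) * B ^ 2 * αL * αR ∧
    1 - ((1 - θL) * (1 - θR) / (θL * θR)) * Real.log (1 - θL) * Real.log (1 - θR)
      > 1 - Real.sqrt ((1 - θL) * (1 - θR)) ∧
    1 - Real.sqrt ((1 - θL) * (1 - θR)) > 0 := by
  obtain ⟨hθL0, hθL1⟩ := hθL
  obtain ⟨hθR0, hθR1⟩ := hθR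
  have hsk : (0:ℝ) < Real.sqrt k := Real.sqrt_pos.mpr hk
  have hLt0 : (0:ℝ) < 1 - θL := by linarith
  have hRt0 : (0:ℝ) < 1 - θR := by linarith
  have hlogL : Real.log (1 - θL) = -(B * Real.sqrt k * αR * θR) := by
    rw [← h1, Real.log_exp]
  have hlogR : Real.log (1 - θR) = -((B / Real.sqrt k) * αL * θL) := by
    rw [← h2, Real.log_exp]
  have hprod : Real.log (1 - θL) * Real.log (1 - θR) = B^2 * αL * αR * θL * θR := by
    rw [hlogL, hlogR]
    field_simp
  have haL := aux_factor_lt θL hθL0 hθL1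
  have haR := aux_factor_lt θR hθR0 hθR1
  have haL0 : 0 ≤ (1 - θL) * (-Real.log (1 - θL)) / θL := by
    apply div_nonneg _ (le_of_lt hθL0)
    apply mul_nonneg (le_of_lt hLt0)
    have : Real.log (1 - θL) < 0 := Real.log_neg hLt0 (by linarith)
    linarith
  have haR0 : 0 ≤ (1 - θR) * (-Real.log (1 - θR)) / θR := by
    apply div_nonneg _ (le_of_lt hθR0)
    apply mul_nonneg (le_of_lt hRt0)
    have : Real.log (1 - θR) < 0 := Real.log_neg hRt0 (by linarith)
    linarith
  have hmul : ((1 - θL) * (-Real.log (1 - θL)) / θL) * ((1 - θR) * (-Real.log (1 - θR)) / θR)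
      < Real.sqrt (1 - θL) * Real.sqrt (1 - θR) :=
    mul_lt_mul'' haL haR haL0 haR0
  have hsqrt_eq : Real.sqrt ((1 - θL) * (1 - θR)) = Real.sqrt (1 - θL) * Real.sqrt (1 - θR) :=
    Real.sqrt_mul (le_of_lt hLt0) _
  have heq : ((1 - θL) * (-Real.log (1 - θL)) / θL) * ((1 - θR) * (-Real.log (1 - θR)) / θR)
      = ((1 - θL) * (1 - θR) / (θL * θR)) * Real.log (1 - θL) * Real.log (1 - θR) := by
    field_simp
  have hkey : ((1 - θL) * (1 - θR) / (θL * θR)) * Real.log (1 - θL) * Real.log (1 - θR)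
      < Real.sqrt ((1 - θL) * (1 - θR)) := by
    rw [hsqrt_eq, ← heq]; exact hmul
  have hsqrt1 : Real.sqrt ((1 - θL) * (1 - θR)) < 1 :=
    aux_sqrt_lt_one (le_of_lt (mul_pos hLt0 hRt0)) (by nlinarith)
  have hBeq : (1 - θL) * (1 - θR) * B ^ 2 * αL * αR
      = ((1 - θL) * (1 - θR) / (θL * θR)) * Real.log (1 - θL) * Real.log (1 - θR) := by
    rw [mul_assoc _ (Real.log (1 - θL)) (Real.log (1 - θR)), hprod]
    field_simp
  refine ⟨?_, ?_, ?_⟩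
  · rw [hBeq]; linarith
  · linarith
  · have : 0 < Real.sqrt ((1 - θL) * (1 - θR)) := Real.sqrt_pos.mpr (mul_pos hLt0 hRt0)
    linarith
end

section
/- Let p ∈ (0,1] be a constant and let M ≥ 100/p be a constant. With probability 1 - e^{-Ω(n)} over the choice of the Erdős–Rényi random graph G ~ G(n,p), the following holds: for every subset U of vertices with |U| ≥ n/10 and every S ⊆ U with |S| ≥ M^2 and |U∖S| ≥ M^2, the number of edges of G with one endpoint in S and the other in U∖S is at least M·n. -/
open MeasureTheory ProbabilityTheory Real Finset
open scoped ENNReal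

set_option maxHeartbeats 1000000

section helpers

variable {ι : Type*} [Fintype ι] {β : Type*} [MeasurableSpace β]

lemma my_pi_map_eval (ν : ι → Measure β) [∀ i, IsProbabilityMeasure (ν i)] (e : ι) :
    (Measure.pi ν).map (Function.eval e) = ν e := by
  classical
  ext A hA
  rw [Measure.map_apply (measurable_pi_apply e) hA]
  have hset : Function.eval e ⁻¹' A = Set.univ.pi (fun j => if j = e then A else Set.univ) := by
    ext g
    simp only [Set.mem_preimage, Set.mem_pi, Set.mem_univ, forall_true_left, Function.eval]
    constructor
    · intro h j
      split_ifs with hj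
      · subst hj; exact h
      · trivial
    · intro h; simpa using h e
  rw [hset, Measure.pi_pi]
  calc ∏ j, ν j (if j = e then A else Set.univ)
      = ∏ j, (if j = e then ν e A else 1) := by
        refine Finset.prod_congr rfl fun j _ => ?_
        split_ifs with hj
        · subst hj; rfl
        · simp
    _ = ν e A := by simp

lemma my_iIndep_eval (ν : ι → Measure β) [∀ i, IsProbabilityMeasure (ν i)] :
    iIndepFun (fun i (g : ι → β) => g i) (Measure.pi ν) := by
  classical
  rw [ProbabilityTheory.iIndepFun_iff_measure_inter_preimage_eq_mul]
  intro S sets hsets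
  have h1 : (⋂ i ∈ S, (fun g : ι → β => g i) ⁻¹' sets i)
      = Set.univ.pi (fun j => if j ∈ S then sets j else Set.univ) := by
    ext g
    simp only [Set.mem_iInter, Set.mem_preimage, Set.mem_pi, Set.mem_univ, forall_true_left]
    constructor
    · intro h j
      split_ifs with hj
      · exact h j hj
      · trivial
    · intro h i hi
      have := h i
      rwa [if_pos hi] at this
  have h2 : ∀ i ∈ S, Measure.pi ν ((fun g : ι → β => g i) ⁻¹' sets i) = ν i (sets i) := by
    intro i hi
    rw [← my_pi_map_eval ν i, Measure.map_apply (measurable_pi_apply i) (hsets i hi)]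
  rw [h1, Measure.pi_pi, Finset.prod_congr rfl h2]
  calc ∏ j, ν j (if j ∈ S then sets j else Set.univ)
      = ∏ j, (if j ∈ S then ν j (sets j) else 1) := by
        refine Finset.prod_congr rfl fun j _ => ?_
        split_ifs with hj
        · rfl
        · simp
    _ = ∏ j ∈ S, ν j (sets j) := by
        rw [Finset.prod_ite_mem, Finset.univ_inter]

end helpers

lemma my_mgf_coord (p : ℝ) (hp0 : 0 < p) (hp1 : p ≤ 1) {n : ℕ} (e : Sym2 (Fin n)) (t : ℝ) :
    mgf (fun g : Sym2 (Fin n) → Bool => if g e = true then (1:ℝ) else 0)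
      (Measure.pi fun _ : Sym2 (Fin n) =>
        (PMF.bernoulli (Real.toNNReal p) (Real.toNNReal_le_one.mpr hp1)).toMeasure) t
    = (1 - p) + p * exp t := by
  classical
  set B : PMF Bool := PMF.bernoulli (Real.toNNReal p) (Real.toNNReal_le_one.mpr hp1) with hB
  set ν : Sym2 (Fin n) → Measure Bool := fun _ => B.toMeasure with hν
  have hmap := MeasureTheory.integral_map (μ := Measure.pi ν) (φ := Function.eval e)
    (f := fun b : Bool => exp (t * (if b = true then (1:ℝ) else 0)))
    (measurable_pi_apply e).aemeasurable
    ((measurable_of_countable _).aestronglyMeasurable)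
  rw [my_pi_map_eval ν e] at hmap
  have : mgf (fun g : Sym2 (Fin n) → Bool => if g e = true then (1:ℝ) else 0)
      (Measure.pi ν) t = ∫ b : Bool, exp (t * (if b = true then (1:ℝ) else 0)) ∂(ν e) := by
    rw [mgf, ← hmap]
  rw [this]
  show ∫ b : Bool, exp (t * (if b = true then (1:ℝ) else 0)) ∂(B.toMeasure) = _
  rw [PMF.integral_eq_sum]
  rw [Fintype.sum_bool]
  simp only [hB, PMF.bernoulli_apply, Bool.cond_true, Bool.cond_false, if_pos rfl, mul_one,
    if_neg (by simp : ¬(false = true)), mul_zero, exp_zero]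
  rw [show ((Real.toNNReal p : ℝ≥0∞)) = ENNReal.ofReal p from rfl]
  rw [ENNReal.toReal_ofReal hp0.le]
  have h1 : ((1 : ℝ≥0∞) - ENNReal.ofReal p).toReal = 1 - p := by
    rw [← ENNReal.ofReal_one, ← ENNReal.ofReal_sub _ hp0.le,
      ENNReal.toReal_ofReal (by linarith)]
  rw [ENNReal.coe_sub, ENNReal.coe_one, show ((Real.toNNReal p : ℝ≥0∞)) = ENNReal.ofReal p from rfl]
  rw [h1]
  norm_num
  ring

lemma my_pair_bound (p M : ℝ) (hp0 : 0 < p) (hp1 : p ≤ 1) (hM : 100 / p ≤ M)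
    {n : ℕ} (U S : Finset (Fin n)) (hU : (n : ℝ) / 10 ≤ U.card) (hSU : S ⊆ U)
    (hS : M ^ 2 ≤ (S.card : ℝ)) (hS' : M ^ 2 ≤ ((U \ S).card : ℝ)) :
    (Measure.pi fun _ : Sym2 (Fin n) =>
        (PMF.bernoulli (Real.toNNReal p) (Real.toNNReal_le_one.mpr hp1)).toMeasure)
      {g | (((S ×ˢ (U \ S)).filter fun q => g s(q.1, q.2) = true).card : ℝ) < M * n}
      ≤ ENNReal.ofReal (Real.exp (-(150:ℝ) * n)) := by
  classical
  set ν : Sym2 (Fin n) → Measure Bool := fun _ =>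
    (PMF.bernoulli (Real.toNNReal p) (Real.toNNReal_le_one.mpr hp1)).toMeasure with hν
  set μ : Measure (Sym2 (Fin n) → Bool) := Measure.pi ν with hμ
  have hinj : Set.InjOn (fun q : Fin n × Fin n => s(q.1, q.2)) ↑(S ×ˢ (U \ S)) := by
    rintro ⟨a, b⟩ hab ⟨c, d⟩ hcd h
    simp only [Finset.mem_coe, Finset.mem_product, Finset.mem_sdiff] at hab hcd
    rw [Sym2.eq_iff] at h
    rcases h with ⟨rfl, rfl⟩ | ⟨rfl, rfl⟩
    · rfl
    · exact absurd hab.1 hcd.2.2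
  set T : Finset (Sym2 (Fin n)) := (S ×ˢ (U \ S)).image (fun q => s(q.1, q.2)) with hT
  set X : Sym2 (Fin n) → (Sym2 (Fin n) → Bool) → ℝ :=
    fun e g => if g e = true then 1 else 0 with hX
  have hXmeas : ∀ e, Measurable (X e) := fun e => measurable_of_countable _
  have hindep : iIndepFun X μ :=
    (my_iIndep_eval ν).comp (fun _ b => if b = true then (1:ℝ) else 0)
      (fun _ => measurable_of_countable _)
  have hsum_eq : ∀ g, (∑ e ∈ T, X e) g
      = (((S ×ˢ (U \ S)).filter fun q => g s(q.1, q.2) = true).card : ℝ) := by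
    intro g
    rw [Finset.sum_apply]
    simp only [hX]
    rw [Finset.sum_boole, hT, Finset.filter_image,
      Finset.card_image_of_injOn (hinj.mono (Finset.filter_subset _ _))]
  have hsub : {g : Sym2 (Fin n) → Bool |
        (((S ×ˢ (U \ S)).filter fun q => g s(q.1, q.2) = true).card : ℝ) < M * n}
      ⊆ {g | (∑ e ∈ T, X e) g ≤ M * n} := by
    intro g hg
    simp only [Set.mem_setOf_eq] at hg ⊢
    rw [hsum_eq]
    exact hg.le
  have hchern := ProbabilityTheory.measure_le_le_exp_mul_mgf (μ := μ) (X := ∑ e ∈ T, X e)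
    (M * n) (t := -1) (by norm_num) Integrable.of_finite
  set v : ℝ := (1 - p) + p * exp (-1) with hv
  have hmgf : mgf (∑ e ∈ T, X e) μ (-1) = v ^ T.card := by
    rw [hindep.mgf_sum hXmeas]
    rw [Finset.prod_congr rfl (fun e _ => my_mgf_coord p hp0 hp1 e (-1)), Finset.prod_const]
  -- numeric facts
  have hn0 : (0:ℝ) ≤ n := Nat.cast_nonneg n
  have hMpos : (0:ℝ) < M := lt_of_lt_of_le (by positivity) hM
  have hpM : 100 ≤ p * M := by
    rw [div_le_iff₀ hp0] at hM
    nlinarith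
  have hM100 : (100:ℝ) ≤ M := by nlinarith
  have hv0 : 0 ≤ v := by nlinarith [exp_pos (-1:ℝ)]
  have hvle : v ≤ exp (-(p/2)) := by
    have hme : exp 1 * exp (-1) = 1 := by rw [← exp_add]; norm_num
    have h2e : (2:ℝ) ≤ exp 1 := by nlinarith [add_one_le_exp (1:ℝ)]
    have hexp : exp (-1) ≤ 1/2 := by nlinarith [exp_pos (-1:ℝ)]
    have hup : v ≤ 1 - p/2 := by nlinarith
    have := add_one_le_exp (-(p/2))
    linarith
  have hTcard : (T.card : ℝ) = (S.card : ℝ) * ((U \ S).card : ℝ) := by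
    rw [hT, Finset.card_image_of_injOn hinj, Finset.card_product]
    push_cast
    ring
  have hvpow : v ^ T.card ≤ exp (-(p/2) * T.card) := by
    calc v ^ T.card ≤ exp (-(p/2)) ^ T.card := pow_le_pow_left₀ hv0 hvle _
      _ = exp ((T.card : ℝ) * (-(p/2))) := (exp_nat_mul _ _).symm
      _ = exp (-(p/2) * T.card) := by ring_nf
  have hab : M ^ 2 * ((S.card : ℝ) + ((U \ S).card : ℝ)) ≤
      2 * ((S.card : ℝ) * ((U \ S).card : ℝ)) := by
    have ha0 : (0:ℝ) ≤ (S.card : ℝ) - M ^ 2 := by linarith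
    have hb0 : (0:ℝ) ≤ ((U \ S).card : ℝ) - M ^ 2 := by linarith
    have hM2 : (0:ℝ) ≤ M ^ 2 := sq_nonneg M
    nlinarith [mul_nonneg ha0 (le_trans hM2 hS'), mul_nonneg hb0 (le_trans hM2 hS)]
  have hn10 : (n : ℝ) / 10 ≤ (S.card : ℝ) + ((U \ S).card : ℝ) := by
    have := Finset.card_sdiff_add_card_eq_card hSU
    have hcast : ((U \ S).card : ℝ) + (S.card : ℝ) = (U.card : ℝ) := by
      exact_mod_cast congrArg (Nat.cast : ℕ → ℝ) this
    linarith
  have hkey : M * n - p / 2 * ((S.card : ℝ) * ((U \ S).card : ℝ)) ≤ -(150:ℝ) * n := by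
    have h2 := mul_le_mul_of_nonneg_left hab hp0.le
    have h3 := mul_le_mul_of_nonneg_left hn10 (by positivity : (0:ℝ) ≤ p * M ^ 2)
    have h4 := mul_le_mul_of_nonneg_right hpM (mul_nonneg hMpos.le hn0)
    have h5 : (0:ℝ) ≤ 3 * n * (M - 100) := by
      apply mul_nonneg (by nlinarith) (by linarith)
    nlinarith
  have hreal : exp (-(-1) * (M * n)) * mgf (∑ e ∈ T, X e) μ (-1)
      ≤ exp (-(150:ℝ) * n) := by
    rw [hmgf]
    calc exp (-(-1) * (M * n)) * v ^ T.card
        ≤ exp (-(-1) * (M * n)) * exp (-(p/2) * T.card) :=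
          mul_le_mul_of_nonneg_left hvpow (exp_pos _).le
      _ = exp (-(-1) * (M * n) + -(p/2) * T.card) := (exp_add _ _).symm
      _ ≤ exp (-(150:ℝ) * n) := by
          rw [exp_le_exp]
          rw [hTcard]
          nlinarith [hkey]
  calc μ {g | (((S ×ˢ (U \ S)).filter fun q => g s(q.1, q.2) = true).card : ℝ) < M * n}
      ≤ μ {g | (∑ e ∈ T, X e) g ≤ M * n} := measure_mono hsub
    _ = ENNReal.ofReal ((μ {g | (∑ e ∈ T, X e) g ≤ M * n}).toReal) :=
        (ENNReal.ofReal_toReal (measure_ne_top _ _)).symm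
    _ ≤ ENNReal.ofReal (exp (-(150:ℝ) * n)) :=
        ENNReal.ofReal_le_ofReal (hchern.trans hreal)
theorem stmt12 (p M : ℝ) (hp0 : 0 < p) (hp1 : p ≤ 1) (hM : 100 / p ≤ M) :
    ∃ c > (0 : ℝ), ∃ N : ℕ, ∀ n : ℕ, N ≤ n →
      (Measure.pi fun _ : Sym2 (Fin n) =>
          (PMF.bernoulli (Real.toNNReal p) (Real.toNNReal_le_one.mpr hp1)).toMeasure)
        {g | ∀ U : Finset (Fin n), (n : ℝ) / 10 ≤ U.card →
          ∀ S ⊆ U, M ^ 2 ≤ (S.card : ℝ) → M ^ 2 ≤ ((U \ S).card : ℝ) →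
            M * n ≤ ((((S ×ˢ (U \ S)).filter fun q => g s(q.1, q.2) = true).card : ℝ))}
        ≥ 1 - ENNReal.ofReal (Real.exp (-c * n)) := by
  classical
  refine ⟨1, one_pos, 0, fun n _ => ?_⟩
  set μ : Measure (Sym2 (Fin n) → Bool) := Measure.pi fun _ : Sym2 (Fin n) =>
    (PMF.bernoulli (Real.toNNReal p) (Real.toNNReal_le_one.mpr hp1)).toMeasure with hμ
  haveI : IsProbabilityMeasure μ := by rw [hμ]; infer_instance
  set E : Set (Sym2 (Fin n) → Bool) := {g | ∀ U : Finset (Fin n), (n : ℝ) / 10 ≤ U.card →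
          ∀ S ⊆ U, M ^ 2 ≤ (S.card : ℝ) → M ^ 2 ≤ ((U \ S).card : ℝ) →
            M * n ≤ ((((S ×ˢ (U \ S)).filter fun q => g s(q.1, q.2) = true).card : ℝ))} with hE
  show μ E ≥ 1 - ENNReal.ofReal (Real.exp (-1 * n))
  set B : Finset (Fin n) × Finset (Fin n) → Set (Sym2 (Fin n) → Bool) := fun pr =>
    {g | ((n : ℝ) / 10 ≤ pr.1.card ∧ pr.2 ⊆ pr.1 ∧ M ^ 2 ≤ (pr.2.card : ℝ)
        ∧ M ^ 2 ≤ ((pr.1 \ pr.2).card : ℝ))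
      ∧ (((pr.2 ×ˢ (pr.1 \ pr.2)).filter fun q => g s(q.1, q.2) = true).card : ℝ) < M * n}
    with hB
  have hsub : Eᶜ ⊆ ⋃ pr, B pr := by
    intro g hg
    simp only [hE, Set.mem_compl_iff, Set.mem_setOf_eq] at hg
    push_neg at hg
    obtain ⟨U, hU, S, hSU, hS, hS', hcount⟩ := hg
    exact Set.mem_iUnion.2 ⟨(U, S), ⟨⟨hU, hSU, hS, hS'⟩, hcount⟩⟩
  have hBle : ∀ pr, μ (B pr) ≤ ENNReal.ofReal (Real.exp (-(150:ℝ) * n)) := by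
    intro pr
    by_cases h : (n : ℝ) / 10 ≤ pr.1.card ∧ pr.2 ⊆ pr.1 ∧ M ^ 2 ≤ (pr.2.card : ℝ)
        ∧ M ^ 2 ≤ ((pr.1 \ pr.2).card : ℝ)
    · refine le_trans (measure_mono ?_)
        (my_pair_bound p M hp0 hp1 hM pr.1 pr.2 h.1 h.2.1 h.2.2.1 h.2.2.2)
      intro g hg
      exact hg.2
    · have hempty : B pr = ∅ := by
        ext g
        simp only [hB, Set.mem_setOf_eq, Set.mem_empty_iff_false, iff_false]
        intro hg
        exact h hg.1
      rw [hempty]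
      simp
  have hcard : (Finset.univ : Finset (Finset (Fin n) × Finset (Fin n))).card = 2 ^ n * 2 ^ n := by
    rw [Finset.card_univ, Fintype.card_prod, Fintype.card_finset, Fintype.card_fin]
  have hrealineq : ((2 ^ n * 2 ^ n : ℕ) : ℝ) * Real.exp (-(150:ℝ) * n)
      ≤ Real.exp (-1 * n) := by
    have h4 : ((2 ^ n * 2 ^ n : ℕ) : ℝ) = 4 ^ n := by
      push_cast
      rw [← mul_pow]
      norm_num
    have h5 : (4:ℝ) ^ n ≤ Real.exp ((149:ℝ) * n) := by
      have : ((n:ℝ) * 149) = (149:ℝ) * n := by ring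
      rw [← this, Real.exp_nat_mul]
      refine pow_le_pow_left₀ (by norm_num) ?_ n
      nlinarith [Real.add_one_le_exp (149:ℝ)]
    calc ((2 ^ n * 2 ^ n : ℕ) : ℝ) * Real.exp (-(150:ℝ) * n)
        ≤ Real.exp ((149:ℝ) * n) * Real.exp (-(150:ℝ) * n) := by
          rw [h4]
          exact mul_le_mul_of_nonneg_right h5 (Real.exp_pos _).le
      _ = Real.exp (-1 * n) := by
          rw [← Real.exp_add]
          congr 1
          ring
  have hEc : μ Eᶜ ≤ ENNReal.ofReal (Real.exp (-1 * n)) := by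
    calc μ Eᶜ ≤ μ (⋃ pr, B pr) := measure_mono hsub
      _ ≤ ∑' pr, μ (B pr) := measure_iUnion_le B
      _ = ∑ pr, μ (B pr) := tsum_fintype _
      _ ≤ ∑ _pr : Finset (Fin n) × Finset (Fin n),
            ENNReal.ofReal (Real.exp (-(150:ℝ) * n)) :=
          Finset.sum_le_sum (fun pr _ => hBle pr)
      _ = ((2 ^ n * 2 ^ n : ℕ) : ℝ≥0∞) * ENNReal.ofReal (Real.exp (-(150:ℝ) * n)) := by
          rw [Finset.sum_const, hcard, nsmul_eq_mul]
      _ = ENNReal.ofReal (((2 ^ n * 2 ^ n : ℕ) : ℝ) * Real.exp (-(150:ℝ) * n)) := by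
          rw [ENNReal.ofReal_mul (by positivity), ENNReal.ofReal_natCast]
      _ ≤ ENNReal.ofReal (Real.exp (-1 * n)) := ENNReal.ofReal_le_ofReal hrealineq
  have hmeasEc : MeasurableSet Eᶜ := (Set.to_countable Eᶜ).measurableSet
  have hcomp : μ E = 1 - μ Eᶜ := by
    conv_lhs => rw [← compl_compl E]
    rw [prob_compl_eq_one_sub hmeasEc]
  rw [hcomp]
  exact tsub_le_tsub_left hEc 1
end
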